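/- For a Tychonoff space X, the bi-compact-open topology on C(X,ℝ) equals the open-point topology if and only if X is discrete. -/

import Mathlib

open Set TopologicalSpace Filter

/-- The open-point topology on `C(X, ℝ)`, generated by the sets
`[U, r]⁻ = {f | ∃ x ∈ U, f x = r}` for `U` open in `X` and `r : ℝ`. -/
def openPointTop (X : Type*) [TopologicalSpace X] : TopologicalSpace C(X, ℝ) :=
  generateFrom {S | ∃ (U : Set X) (r : ℝ), IsOpen U ∧ S = {f : C(X, ℝ) | ∃ x ∈ U, f x = r}}

/-- The point-open topology (topology of pointwise convergence) on `C(X, ℝ)`. -/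
def pointOpenTop (X : Type*) [TopologicalSpace X] : TopologicalSpace C(X, ℝ) :=
  generateFrom {S | ∃ (x : X) (V : Set ℝ), IsOpen V ∧ S = {f : C(X, ℝ) | f x ∈ V}}

/-- The bi-compact-open topology `kh`: the join (coarsest common refinement) of the
compact-open topology and the open-point topology.  In Mathlib's order on
`TopologicalSpace` (where smaller = finer), this join is `⊓`. -/
def biCompactOpenTop (X : Type*) [TopologicalSpace X] : TopologicalSpace C(X, ℝ) :=
  ContinuousMap.compactOpen ⊓ openPointTop X

/-- The bi-point-open topology `ph`: the join of the point-open topology and the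
open-point topology. -/
def biPointOpenTop (X : Type*) [TopologicalSpace X] : TopologicalSpace C(X, ℝ) :=
  pointOpenTop X ⊓ openPointTop X

/-- `lc X` is the set of points of `X` having a compact neighborhood. -/
def lcSet (X : Type*) [TopologicalSpace X] : Set X :=
  {x | ∃ K : Set X, IsCompact K ∧ K ∈ nhds x}

/-- A set `A` is `Gδ`-dense if every nonempty `Gδ`-set meets it. -/
def GdeltaDense {X : Type*} [TopologicalSpace X] (A : Set X) : Prop :=
  ∀ G : Set X, IsGδ G → G.Nonempty → (G ∩ A).Nonempty

/-- A nonempty set `B` is an `R`-set if countably many continuous real functions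
map it onto all of `ℝ`. -/
def IsRSet {X : Type*} [TopologicalSpace X] (B : Set X) : Prop :=
  B.Nonempty ∧ ∃ f : ℕ → C(X, ℝ), (⋃ n, (f n) '' B) = Set.univ

/-- `X` is `R`-separable if there is a countable collection of `R`-sets such that
every nonempty open set contains a member of the collection. -/
def RSeparable (X : Type*) [TopologicalSpace X] : Prop :=
  ∃ S : ℕ → Set X, (∀ n, IsRSet (S n)) ∧
    ∀ U : Set X, IsOpen U → U.Nonempty → ∃ n, S n ⊆ U

/-- A topology is submetrizable if it is finer than some metrizable topology. -/
def Submetrizable (α : Type*) [t : TopologicalSpace α] : Prop :=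
  ∃ t' : TopologicalSpace α, @MetrizableSpace α t' ∧ t ≤ t'

/-- `X` is hemicompact if there is a sequence of compact sets cofinal in the
compact subsets of `X`. -/
def Hemicompact (X : Type*) [TopologicalSpace X] : Prop :=
  ∃ K : ℕ → Set X, (∀ n, IsCompact (K n)) ∧ ∀ A : Set X, IsCompact A → ∃ n, A ⊆ K n

/-- `X` is almost σ-compact if it has a dense σ-compact subset. -/
def AlmostSigmaCompact (X : Type*) [TopologicalSpace X] : Prop :=
  ∃ K : ℕ → Set X, (∀ n, IsCompact (K n)) ∧ Dense (⋃ n, K n)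

theorem stmt10 {X : Type*} [TopologicalSpace X] [T2Space X] [CompletelyRegularSpace X] :
    biCompactOpenTop X = openPointTop X ↔ DiscreteTopology X := by
  constructor
  · intro heq
    rw [discreteTopology_iff_isOpen_singleton]
    intro x
    have hle : openPointTop X ≤ ContinuousMap.compactOpen := by
      have : ContinuousMap.compactOpen ⊓ openPointTop X = openPointTop X := heq
      exact inf_eq_right.mp this
    -- the set W = {f | f x ∈ (-1,1)} is compact-open open, hence openPointTop-open
    have hWco : IsOpen {f : C(X, ℝ) | f x ∈ Ioo (-1 : ℝ) 1} := by
      have := ContinuousMap.isOpen_setOf_mapsTo (isCompact_singleton (x := x))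
        (isOpen_Ioo (a := (-1 : ℝ)) (b := 1))
      convert this using 1
      ext f
      simp [Set.mapsTo_singleton]
    have hW : @IsOpen C(X, ℝ) (openPointTop X) {f : C(X, ℝ) | f x ∈ Ioo (-1 : ℝ) 1} := hle _ hWco
    have hb := @TopologicalSpace.isTopologicalBasis_of_subbasis C(X, ℝ) (openPointTop X)
      {S | ∃ (U : Set X) (r : ℝ), IsOpen U ∧ S = {f : C(X, ℝ) | ∃ x ∈ U, f x = r}} rfl
    have h0 : (0 : C(X, ℝ)) ∈ {f : C(X, ℝ) | f x ∈ Ioo (-1 : ℝ) 1} := by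
      simp
    obtain ⟨t, ht, h0t, htW⟩ :=
      (@TopologicalSpace.IsTopologicalBasis.isOpen_iff _ (openPointTop X) _ _ hb).mp hW _ h0
    obtain ⟨F, ⟨hFfin, hFsub⟩, rfl⟩ := ht
    have hdata : ∀ s : F, ∃ (U : Set X) (r : ℝ), IsOpen U ∧
        (s : Set C(X, ℝ)) = {f : C(X, ℝ) | ∃ x ∈ U, f x = r} := fun s => hFsub s.2
    choose U r hUopen hseq using hdata
    -- 0 ∈ each member forces r = 0 and U nonempty
    have h0mem : ∀ s : F, ∃ y ∈ U s, (0 : ℝ) = r s := by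
      intro s
      have : (0 : C(X, ℝ)) ∈ (s : Set C(X, ℝ)) := h0t _ s.2
      rw [hseq s] at this
      obtain ⟨y, hy, hy0⟩ := this
      exact ⟨y, hy, by simpa using hy0⟩
    have hr0 : ∀ s : F, r s = 0 := fun s => ((h0mem s).choose_spec.2).symm
    by_cases hc : ∃ s : F, U s ⊆ {x}
    · obtain ⟨s, hsub⟩ := hc
      have hxU : x ∈ U s := by
        obtain ⟨y, hy, -⟩ := h0mem s
        have hyx' : y = x := hsub hy
        exact hyx' ▸ hy
      have : U s = {x} := hsub.antisymm (by simpa [singleton_subset_iff] using hxU)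
      exact this ▸ hUopen s
    · push_neg at hc
      choose y hyU hyx using fun s : F => not_subset.mp (hc s)
      haveI : Finite F := hFfin.to_subtype
      have hAfin : (Set.range y).Finite := Set.finite_range y
      have hAclosed : IsClosed (Set.range y) := hAfin.isClosed
      have hxA : x ∉ Set.range y := by
        rintro ⟨s, rfl⟩
        exact hyx s rfl
      obtain ⟨f, hfc, hfx, hfA⟩ :=
        CompletelyRegularSpace.completely_regular x (Set.range y) hAclosed hxA
      set g : C(X, ℝ) := ⟨fun z => 2 - 2 * (f z : ℝ), by fun_prop⟩ with hg
      have hgmem : g ∈ ⋂₀ F := by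
        intro s hsF
        have hs' : s = {f : C(X, ℝ) | ∃ z ∈ U ⟨s, hsF⟩, f z = r ⟨s, hsF⟩} := hseq ⟨s, hsF⟩
        rw [hs']
        refine ⟨y ⟨s, hsF⟩, hyU _, ?_⟩
        have h1 : f (y ⟨s, hsF⟩) = 1 := hfA (Set.mem_range_self _)
        rw [hr0 ⟨s, hsF⟩]
        simp [hg, h1]
      have := htW hgmem
      simp only [mem_setOf_eq, hg, ContinuousMap.coe_mk, hfx, Set.Icc.coe_zero,
        mem_Ioo] at this
      norm_num at this
  · intro hd
    have hle : openPointTop X ≤ ContinuousMap.compactOpen := by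
      rw [ContinuousMap.compactOpen_eq]
      refine le_generateFrom ?_
      rintro s ⟨K, hK, V, hV, rfl⟩
      have hKfin : K.Finite := hK.finite (isDiscrete_iff_discreteTopology.mpr inferInstance)
      have heq : {f : C(X, ℝ) | MapsTo f K V} = ⋂ x ∈ K, {f : C(X, ℝ) | f x ∈ V} := by
        ext f; simp [MapsTo]
      show @IsOpen _ (openPointTop X) {f : C(X, ℝ) | MapsTo f K V}
      rw [heq]
      refine @Set.Finite.isOpen_biInter _ _ (openPointTop X) _ _ hKfin ?_
      intro x hx
      have heq2 : {f : C(X, ℝ) | f x ∈ V} =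
          ⋃ r ∈ V, {f : C(X, ℝ) | ∃ y ∈ ({x} : Set X), f y = r} := by
        ext f
        simp
      rw [heq2]
      refine @isOpen_biUnion _ _ (openPointTop X) _ _ ?_
      intro r hr
      exact TopologicalSpace.isOpen_generateFrom_of_mem ⟨{x}, r, isOpen_discrete _, rfl⟩
    show ContinuousMap.compactOpen ⊓ openPointTop X = openPointTop X
    exact inf_eq_right.mpr hle
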